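/- Let 𝒞 be a nonempty collection of compact subsets of the closed unit ball in ℝ^d that is closed under rescalings and closed under Hausdorff convergence, and let α ∈ 𝒜(𝒞) = {α ≥ 0 : H^α(K) = 0 for every K ∈ 𝒞}. Then there exists a constant C(α) such that for every K ∈ 𝒞 and every 0 < r ≤ 1, the minimal number N(K, r) of open balls of radius r needed to cover K satisfies N(K, r) · r^α ≤ C(α). -/

import Mathlib

open MeasureTheory Metric Set Filter Topology
open scoped ENNReal

noncomputable section

/-- `coverNum K r` is the minimal number of open balls of radius `r` needed to cover `K`
(for compact `K` such finite covers always exist). -/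
def coverNum {X : Type*} [PseudoMetricSpace X] (K : Set X) (r : ℝ) : ℕ :=
  sInf {n : ℕ | ∃ s : Finset X, s.card = n ∧ K ⊆ ⋃ x ∈ s, Metric.ball x r}

set_option linter.unusedSectionVars false

namespace WorkRaccoonAux

/-! ### Elementary real/rpow helpers -/

theorem pow_rpow_comm {x : ℝ} (hx : 0 ≤ x) (n : ℕ) (a : ℝ) :
    ((x^n : ℝ)) ^ a = ((x ^ a) ^ n : ℝ) := by
  rw [← Real.rpow_natCast x n, ← Real.rpow_natCast (x ^ a) n,
    ← Real.rpow_mul hx, ← Real.rpow_mul hx, mul_comm]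

theorem add_rpow_le {a b c : ℝ} (ha : 0 ≤ a) (hb : 0 ≤ b) (hc : 0 ≤ c) :
    (a + b) ^ c ≤ (2:ℝ)^c * (a ^ c + b ^ c) := by
  have h2 : (0:ℝ) ≤ 2 := by norm_num
  rcases le_total a b with h | h
  · calc (a+b)^c ≤ (2*b)^c := Real.rpow_le_rpow (by linarith) (by linarith) hc
      _ = 2^c * b^c := Real.mul_rpow h2 hb
      _ ≤ 2^c * (a^c + b^c) := by
          have : (0:ℝ) ≤ a^c := Real.rpow_nonneg ha c
          have h2c : (0:ℝ) ≤ (2:ℝ)^c := Real.rpow_nonneg h2 c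
          nlinarith
  · calc (a+b)^c ≤ (2*a)^c := Real.rpow_le_rpow (by linarith) (by linarith) hc
      _ = 2^c * a^c := Real.mul_rpow h2 ha
      _ ≤ 2^c * (a^c + b^c) := by
          have : (0:ℝ) ≤ b^c := Real.rpow_nonneg hb c
          have h2c : (0:ℝ) ≤ (2:ℝ)^c := Real.rpow_nonneg h2 c
          nlinarith

theorem tpow_halfpow {α : ℝ} (m : ℕ) : ((2:ℝ)^α)^m * (((1/2:ℝ)^m) ^ α) = 1 := by
  have e1 : ((2:ℝ)^α)^m = ((2:ℝ)^m) ^ α := by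
    rw [← Real.rpow_natCast ((2:ℝ)^α) m, ← Real.rpow_natCast (2:ℝ) m,
      ← Real.rpow_mul (by norm_num), ← Real.rpow_mul (by norm_num), mul_comm]
  rw [e1, ← Real.mul_rpow (by positivity) (by positivity)]
  have : ((2:ℝ)^m) * (1/2:ℝ)^m = 1 := by
    rw [← mul_pow]; norm_num
  rw [this, Real.one_rpow]

theorem exists_dyadic {r : ℝ} (hr0 : 0 < r) (hr1 : r ≤ 1) :
    ∃ m : ℕ, (1/2 : ℝ)^m ≤ r ∧ r < 2 * (1/2 : ℝ)^m := by
  have hex : ∃ m : ℕ, (1/2 : ℝ)^m ≤ r := by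
    obtain ⟨n, hn⟩ := exists_pow_lt_of_lt_one hr0 (by norm_num : (1/2 : ℝ) < 1)
    exact ⟨n, hn.le⟩
  classical
  let m := Nat.find hex
  refine ⟨m, Nat.find_spec hex, ?_⟩
  rcases Nat.eq_zero_or_pos m with h | h
  · rw [h]; norm_num; linarith
  · have := Nat.find_min hex (m := m - 1) (by omega)
    push_neg at this
    have h2 : (1/2 : ℝ)^(m-1) = 2 * (1/2 : ℝ)^m := by
      have hm : m = (m-1) + 1 := by omega
      rw [hm]
      rw [pow_succ]
      have : m - 1 + 1 - 1 = m - 1 := by omega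
      rw [this]
      ring
    linarith [h2 ▸ this]

theorem good_select {g : ℕ → ℕ} {t : ℝ} (ht : 1 ≤ t)
    (hub : ∀ C : ℝ, ∃ n, C * t^n < g n) (C : ℝ) :
    ∃ n, (∀ j ≤ n, (g j : ℝ) * t^(n-j) ≤ g n) ∧ C < g n := by
  obtain ⟨N, hN⟩ := hub C
  have ht0 : (0:ℝ) < t := lt_of_lt_of_le one_pos ht
  obtain ⟨n, hn, hmax⟩ := Finset.exists_max_image (Finset.range (N+1))
    (fun k => (g k : ℝ) / t^k) ⟨N, Finset.mem_range.2 (by omega)⟩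
  have hnN : n ≤ N := by simpa using Nat.lt_succ_iff.1 (Finset.mem_range.1 hn)
  refine ⟨n, ?_, ?_⟩
  · intro j hj
    have := hmax j (Finset.mem_range.2 (by omega))
    rw [div_le_div_iff₀ (by positivity) (by positivity)] at this
    have hpow : t^(n-j) * t^j = t^n := by
      rw [← pow_add]
      congr 1
      omega
    calc (g j : ℝ) * t^(n-j) = ((g j : ℝ) * t^n) / t^j := by
          rw [← hpow]; field_simp
      _ ≤ ((g n : ℝ) * t^j) / t^j := by
          exact div_le_div_of_nonneg_right this (by positivity)
      _ = g n := by field_simp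
  · have h1 : (g N : ℝ) / t^N ≤ (g n : ℝ) / t^n := hmax N (Finset.mem_range.2 (by omega))
    have h2 : C < (g N : ℝ) / t^N := by
      rw [lt_div_iff₀ (by positivity)]
      exact hN
    have h3 : (g n : ℝ) / t^n ≤ g n := by
      apply div_le_self (by positivity)
      exact one_le_pow₀ ht
    linarith

/-! ### Packing numbers for a class of subsets of the unit ball -/

variable {E : Type*} [NormedAddCommGroup E] [NormedSpace ℝ E]

/-- `ρ`-separated finite sets. -/
def IsSep (ρ : ℝ) (s : Finset E) : Prop := ∀ p ∈ s, ∀ q ∈ s, p ≠ q → ρ ≤ dist p q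

def packSet (𝒞 : Set (Set E)) (n : ℕ) : Set ℕ :=
  {m | ∃ K ∈ 𝒞, ∃ s : Finset E, ↑s ⊆ K ∧ IsSep ((1/2 : ℝ)^n) s ∧ s.card = m}

def packMax (𝒞 : Set (Set E)) (n : ℕ) : ℕ := sSup (packSet 𝒞 n)

theorem sep_card_bdd [ProperSpace E] {ρ : ℝ} (hρ : 0 < ρ) :
    ∃ M : ℕ, ∀ s : Finset E, ↑s ⊆ closedBall (0 : E) 1 → IsSep ρ s → s.card ≤ M := by
  obtain ⟨T, hT⟩ := (isCompact_closedBall (0 : E) 1).elim_finite_subcover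
    (fun x : E => ball x (ρ/2)) (fun x => isOpen_ball)
    (fun y hy => mem_iUnion.2 ⟨y, mem_ball_self (by linarith)⟩)
  refine ⟨T.card, fun s hs hsep => ?_⟩
  classical
  have : ∀ p ∈ s, ∃ x ∈ T, p ∈ ball x (ρ/2) := by
    intro p hp
    have := hT (hs hp)
    simpa using this
  choose f hfT hfb using this
  refine Finset.card_le_card_of_injOn (fun p => if h : p ∈ s then f p h else 0)
    (fun p hp => by simp [Finset.mem_coe.1 hp, hfT p (Finset.mem_coe.1 hp)]) ?_
  intro p hp q hq hpq
  simp only [Finset.mem_coe] at hp hq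
  simp only [dif_pos hp, dif_pos hq] at hpq
  by_contra hne
  have h1 := hfb p hp
  have h2 := hfb q hq
  rw [hpq] at h1
  have : dist p q < ρ := by
    have h3 := dist_triangle p (f q hq) q
    rw [mem_ball] at h1 h2
    rw [dist_comm (f q hq) q] at h3
    linarith [h1, h2, h3]
  exact absurd (hsep p hp q hq hne) (not_le.2 this)

variable {𝒞 : Set (Set E)}

theorem packSet_nonempty (hne : 𝒞.Nonempty) (n : ℕ) : (packSet 𝒞 n).Nonempty := by
  obtain ⟨K, hK⟩ := hne
  exact ⟨0, K, hK, ∅, by simp, fun p hp => by simp at hp, rfl⟩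

theorem packSet_bdd [ProperSpace E]
    (hcpt : ∀ K ∈ 𝒞, IsCompact K ∧ K ⊆ closedBall (0 : E) 1) (n : ℕ) :
    BddAbove (packSet 𝒞 n) := by
  obtain ⟨M, hM⟩ := sep_card_bdd (E := E) (ρ := (1/2 : ℝ)^n) (by positivity)
  exact ⟨M, fun m hm => by
    obtain ⟨K, hK, s, hsK, hsep, rfl⟩ := hm
    exact hM s (hsK.trans (hcpt K hK).2) hsep⟩

theorem card_le_packMax [ProperSpace E]
    (hcpt : ∀ K ∈ 𝒞, IsCompact K ∧ K ⊆ closedBall (0 : E) 1)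
    {K : Set E} (hK : K ∈ 𝒞) {n : ℕ} {s : Finset E} (hsK : ↑s ⊆ K)
    (hsep : IsSep ((1/2 : ℝ)^n) s) : s.card ≤ packMax 𝒞 n :=
  le_csSup (packSet_bdd hcpt n) ⟨K, hK, s, hsK, hsep, rfl⟩

theorem packMax_mem [ProperSpace E] (hne : 𝒞.Nonempty)
    (hcpt : ∀ K ∈ 𝒞, IsCompact K ∧ K ⊆ closedBall (0 : E) 1) (n : ℕ) :
    packMax 𝒞 n ∈ packSet 𝒞 n :=
  Nat.sSup_mem (packSet_nonempty hne n) (packSet_bdd hcpt n)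

/-- A maximal `ρ`-separated subset of `K`; maximality gives the covering property. -/
theorem exists_maximal_sep [ProperSpace E] {K : Set E} (hK1 : K ⊆ closedBall (0 : E) 1)
    {ρ : ℝ} (hρ : 0 < ρ) :
    ∃ Q : Finset E, ↑Q ⊆ K ∧ IsSep ρ Q ∧ ∀ y ∈ K, ∃ p ∈ Q, dist y p < ρ := by
  classical
  set A : Set ℕ := {m | ∃ Q : Finset E, ↑Q ⊆ K ∧ IsSep ρ Q ∧ Q.card = m} with hA
  have hAne : A.Nonempty := ⟨0, ∅, by simp, fun p hp => by simp at hp, rfl⟩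
  obtain ⟨M, hM⟩ := sep_card_bdd (E := E) hρ
  have hAbdd : BddAbove A := ⟨M, fun m hm => by
    obtain ⟨Q, hQK, hQsep, rfl⟩ := hm
    exact hM Q (hQK.trans hK1) hQsep⟩
  obtain ⟨Q, hQK, hQsep, hQcard⟩ := Nat.sSup_mem hAne hAbdd
  refine ⟨Q, hQK, hQsep, fun y hy => ?_⟩
  by_contra hcon
  push_neg at hcon
  have hyQ : y ∉ Q := fun hyQ => absurd (hcon y hyQ) (by simp [hρ])
  have hins : (insert y Q).card ∈ A := by
    refine ⟨insert y Q, ?_, ?_, rfl⟩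
    · intro p hp
      rcases Finset.mem_insert.1 (by simpa using hp) with h | h
      · exact h ▸ hy
      · exact hQK h
    · intro p hp q hq hpq
      rcases Finset.mem_insert.1 hp with h1 | h1 <;> rcases Finset.mem_insert.1 hq with h2 | h2
      · exact absurd (h1.trans h2.symm) hpq
      · exact h1 ▸ hcon q h2
      · exact h2 ▸ (dist_comm p y ▸ hcon p h1)
      · exact hQsep p h1 q h2 hpq
  have := le_csSup hAbdd hins
  rw [Finset.card_insert_of_notMem hyQ, hQcard] at this
  omega

/-- Zoom lemma: a separated finset of `K` inside a small ball has few points. -/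
theorem zoom_card_le [ProperSpace E]
    (hcpt : ∀ K ∈ 𝒞, IsCompact K ∧ K ⊆ closedBall (0 : E) 1)
    (hres : ∀ K ∈ 𝒞, ∀ x ∈ closedBall (0 : E) 1, ∀ r : ℝ, 0 < r → r ≤ 1 →
      (((fun w => r⁻¹ • (w - x)) '' K) ∩ closedBall 0 1) ∈ 𝒞)
    {K : Set E} (hK : K ∈ 𝒞) {x : E} (hx : x ∈ K) {r : ℝ} (hr0 : 0 < r) (hr1 : r ≤ 1)
    {m : ℕ} {s : Finset E} (hsK : ↑s ⊆ K) (hball : ∀ p ∈ s, dist p x < r)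
    (hsep : IsSep (r * (1/2 : ℝ)^m) s) : s.card ≤ packMax 𝒞 m := by
  classical
  set f : E → E := fun w => r⁻¹ • (w - x) with hf
  have hfdist : ∀ p q : E, dist (f p) (f q) = r⁻¹ * dist p q := by
    intro p q
    rw [hf]
    rw [dist_smul₀, dist_sub_right, Real.norm_eq_abs, abs_of_pos (by positivity : (0:ℝ) < r⁻¹)]
  have hfinj : Function.Injective f := by
    intro a b hab
    have := hfdist a b
    rw [hab] at this
    simp only [dist_self] at this
    have : dist a b = 0 := by
      rcases (mul_eq_zero.1 this.symm) with h | h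
      · exact absurd h (by positivity)
      · exact h
    exact dist_eq_zero.1 this
  have hK' : ((f '' K) ∩ closedBall 0 1) ∈ 𝒞 := hres K hK x ((hcpt K hK).2 hx) r hr0 hr1
  refine le_trans ?_ (card_le_packMax hcpt hK' (s := s.image f) ?_ ?_)
  · rw [Finset.card_image_of_injective _ hfinj]
  · intro p hp
    simp only [Finset.coe_image, Set.mem_image, Finset.mem_coe] at hp
    obtain ⟨q, hq, rfl⟩ := hp
    refine ⟨⟨q, hsK hq, rfl⟩, ?_⟩
    rw [mem_closedBall]
    have h1 : dist (f q) (f x) = r⁻¹ * dist q x := hfdist q x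
    have hfx : f x = 0 := by simp [hf]
    rw [hfx] at h1
    rw [h1]
    rw [inv_mul_le_iff₀ hr0, mul_one]
    exact (hball q hq).le
  · intro p hp q hq hpq
    simp only [Finset.mem_image] at hp hq
    obtain ⟨a, ha, rfl⟩ := hp
    obtain ⟨b, hb, rfl⟩ := hq
    have hab : a ≠ b := fun h => hpq (by rw [h])
    rw [hfdist a b]
    have := hsep a ha b hb hab
    rw [le_inv_mul_iff₀ hr0]
    exact this

/-- Submultiplicativity of packing numbers. -/
theorem packMax_add_le [ProperSpace E] (hne : 𝒞.Nonempty)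
    (hcpt : ∀ K ∈ 𝒞, IsCompact K ∧ K ⊆ closedBall (0 : E) 1)
    (hres : ∀ K ∈ 𝒞, ∀ x ∈ closedBall (0 : E) 1, ∀ r : ℝ, 0 < r → r ≤ 1 →
      (((fun w => r⁻¹ • (w - x)) '' K) ∩ closedBall 0 1) ∈ 𝒞)
    (m n : ℕ) :
    packMax 𝒞 (m + n) ≤ packMax 𝒞 m * packMax 𝒞 n := by
  classical
  obtain ⟨K, hK, s, hsK, hsep, hcard⟩ := packMax_mem hne hcpt (m + n)
  obtain ⟨Q, hQK, hQsep, hQmax⟩ := exists_maximal_sep (hcpt K hK).2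
    (ρ := (1/2 : ℝ)^m) (by positivity)
  have hsub : s ⊆ Q.biUnion (fun q => s.filter (fun p => dist p q < (1/2 : ℝ)^m)) := by
    intro p hp
    obtain ⟨q, hq, hd⟩ := hQmax p (hsK hp)
    exact Finset.mem_biUnion.2 ⟨q, hq, Finset.mem_filter.2 ⟨hp, hd⟩⟩
  calc packMax 𝒞 (m + n) = s.card := hcard.symm
    _ ≤ (Q.biUnion (fun q => s.filter (fun p => dist p q < (1/2 : ℝ)^m))).card :=
        Finset.card_le_card hsub
    _ ≤ ∑ q ∈ Q, (s.filter (fun p => dist p q < (1/2 : ℝ)^m)).card :=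
        Finset.card_biUnion_le
    _ ≤ ∑ _q ∈ Q, packMax 𝒞 n := by
        refine Finset.sum_le_sum (fun q hq => ?_)
        refine zoom_card_le hcpt hres hK (hQK hq) (r := (1/2 : ℝ)^m) (by positivity)
          (pow_le_one₀ (by norm_num) (by norm_num)) ?_ ?_ ?_
        · intro p hp
          exact hsK (Finset.mem_filter.1 hp).1
        · intro p hp
          exact (Finset.mem_filter.1 hp).2
        · intro p hp q' hq' hpq
          have := hsep p (Finset.mem_filter.1 hp).1 q' (Finset.mem_filter.1 hq').1 hpq
          rw [pow_add] at this
          exact this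
    _ = Q.card * packMax 𝒞 n := by rw [Finset.sum_const, smul_eq_mul]
    _ ≤ packMax 𝒞 m * packMax 𝒞 n := by
        exact Nat.mul_le_mul_right _ (card_le_packMax hcpt hK hQK hQsep)

/-- Per-ball counting bound at a "good" scale `n`. -/
theorem filter_ball_card [ProperSpace E]
    (hcpt : ∀ K ∈ 𝒞, IsCompact K ∧ K ⊆ closedBall (0 : E) 1)
    (hres : ∀ K ∈ 𝒞, ∀ x ∈ closedBall (0 : E) 1, ∀ r : ℝ, 0 < r → r ≤ 1 →
      (((fun w => r⁻¹ • (w - x)) '' K) ∩ closedBall 0 1) ∈ 𝒞)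
    {α t : ℝ} (hα : 0 ≤ α) (ht : t = (2:ℝ) ^ α)
    {n : ℕ} (hgood : ∀ j ≤ n, (packMax 𝒞 j : ℝ) * t^(n-j) ≤ packMax 𝒞 n)
    {K : Set E} (hK : K ∈ 𝒞) {s : Finset E} (hsK : ↑s ⊆ K)
    (hsep : IsSep ((1/2 : ℝ)^n) s) (y : E) {ρ : ℝ} (hρ0 : 0 < ρ) (hρ : ρ ≤ 1/8) :
    ((s.filter (fun p => dist p y < ρ)).card : ℝ)
      ≤ 1 + (packMax 𝒞 n : ℝ) * t^3 * ρ ^ α := by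
  classical
  have ht1 : (1:ℝ) ≤ t := by
    rw [ht]
    calc (1:ℝ) = (2:ℝ) ^ (0:ℝ) := (Real.rpow_zero 2).symm
    _ ≤ (2:ℝ) ^ α := Real.rpow_le_rpow_of_exponent_le (by norm_num) hα
  have ht0 : (0:ℝ) < t := lt_of_lt_of_le one_pos ht1
  have hρα : (0:ℝ) ≤ ρ ^ α := Real.rpow_nonneg hρ0.le α
  have hRHS0 : (0:ℝ) ≤ (packMax 𝒞 n : ℝ) * t^3 * ρ ^ α := by positivity
  obtain ⟨m, hm1, hm2⟩ := exists_dyadic hρ0 (by linarith)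
  have hm3 : 3 ≤ m := by
    by_contra hcon
    have : (1/2:ℝ)^2 ≤ (1/2:ℝ)^m :=
      pow_le_pow_of_le_one (by norm_num) (by norm_num) (by omega)
    norm_num at this
    linarith
  set j := m - 2 with hjdef
  have hj1 : 1 ≤ j := by omega
  have hrm : (1/2:ℝ)^m = (1/2:ℝ)^j * (1/2:ℝ)^2 := by
    rw [← pow_add]; congr 1; omega
  have h2ρ : 2 * ρ < (1/2:ℝ)^j := by
    have : (1/2:ℝ)^j = 4 * (1/2:ℝ)^m := by rw [hrm]; ring
    rw [this]; linarith
  set F := s.filter (fun p => dist p y < ρ) with hF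
  rcases Finset.eq_empty_or_nonempty F with hFe | ⟨q₀, hq₀⟩
  · rw [hFe]; simp; linarith
  have hq₀s : q₀ ∈ s := (Finset.mem_filter.1 hq₀).1
  have hq₀y : dist q₀ y < ρ := (Finset.mem_filter.1 hq₀).2
  have hballF : ∀ p ∈ F, dist p q₀ < (1/2:ℝ)^j := by
    intro p hp
    have h1 : dist p y < ρ := (Finset.mem_filter.1 hp).2
    calc dist p q₀ ≤ dist p y + dist y q₀ := dist_triangle _ _ _
      _ < ρ + ρ := by rw [dist_comm y q₀]; linarith
      _ < (1/2:ℝ)^j := by linarith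
  rcases le_or_gt j n with hjn | hjn
  · -- main case: zoom in
    have hcard : F.card ≤ packMax 𝒞 (n - j) := by
      refine zoom_card_le hcpt hres hK (hsK hq₀s) (r := (1/2:ℝ)^j)
        (by positivity) (pow_le_one₀ (by norm_num) (by norm_num)) ?_ hballF ?_
      · exact fun p hp => hsK (Finset.mem_filter.1 hp).1
      · intro p hp q hq hpq
        have := hsep p (Finset.mem_filter.1 hp).1 q (Finset.mem_filter.1 hq).1 hpq
        have hpow : (1/2:ℝ)^j * (1/2:ℝ)^(n-j) = (1/2:ℝ)^n := by
          rw [← pow_add]; congr 1; omega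
        rw [hpow]; exact this
    have hgoodnj : (packMax 𝒞 (n-j) : ℝ) * t^j ≤ packMax 𝒞 n := by
      have := hgood (n - j) (Nat.sub_le n j)
      have hnnj : n - (n - j) = j := by omega
      rwa [hnnj] at this
    have hkey : (1:ℝ) ≤ t^(j+3) * ρ ^ α := by
      have h1 : ((1/2:ℝ)^m) ^ α ≤ ρ ^ α :=
        Real.rpow_le_rpow (by positivity) hm1 hα
      have h2 : ((2:ℝ)^α)^m * ((1/2:ℝ)^m) ^ α = 1 := tpow_halfpow m
      have h3 : t^m ≤ t^(j+3) := pow_le_pow_right₀ ht1 (by omega)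
      calc (1:ℝ) = ((2:ℝ)^α)^m * ((1/2:ℝ)^m) ^ α := h2.symm
        _ = t^m * ((1/2:ℝ)^m) ^ α := by rw [ht]
        _ ≤ t^(j+3) * ((1/2:ℝ)^m) ^ α := by
            apply mul_le_mul_of_nonneg_right h3 (by positivity)
        _ ≤ t^(j+3) * ρ ^ α := by
            apply mul_le_mul_of_nonneg_left h1 (by positivity)
    have hmain : (packMax 𝒞 (n-j) : ℝ) ≤ (packMax 𝒞 n : ℝ) * t^3 * ρ ^ α := by
      have e1 : (packMax 𝒞 (n-j) : ℝ) * 1 ≤ (packMax 𝒞 (n-j) : ℝ) * (t^(j+3) * ρ^α) :=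
        mul_le_mul_of_nonneg_left hkey (by positivity)
      rw [mul_one] at e1
      calc (packMax 𝒞 (n-j) : ℝ) ≤ (packMax 𝒞 (n-j) : ℝ) * (t^(j+3) * ρ^α) := e1
        _ = ((packMax 𝒞 (n-j) : ℝ) * t^j) * (t^3 * ρ^α) := by rw [pow_add]; ring
        _ ≤ (packMax 𝒞 n : ℝ) * (t^3 * ρ^α) := by
            apply mul_le_mul_of_nonneg_right hgoodnj (by positivity)
        _ = (packMax 𝒞 n : ℝ) * t^3 * ρ^α := by ring
    have : (F.card : ℝ) ≤ (packMax 𝒞 (n-j) : ℝ) := by exact_mod_cast hcard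
    linarith
  · -- small scale: at most one point
    have hcard1 : F.card ≤ 1 := by
      rw [Finset.card_le_one]
      intro p hp q hq
      by_contra hpq
      have h1 := hsep p (Finset.mem_filter.1 hp).1 q (Finset.mem_filter.1 hq).1 hpq
      have h2 : dist p q < (1/2:ℝ)^n := by
        have hd : dist p q ≤ dist p q₀ + dist q₀ q := dist_triangle _ _ _
        have e1 := hballF p hp
        have e2 := hballF q hq
        rw [dist_comm q₀ q] at hd
        have hjn' : (1/2:ℝ)^j ≤ (1/2:ℝ)^(n+1) :=
          pow_le_pow_of_le_one (by norm_num) (by norm_num) (by omega)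
        have : (2:ℝ) * (1/2:ℝ)^(n+1) = (1/2:ℝ)^n := by rw [pow_succ]; ring
        nlinarith [hρ0]
      linarith
    have : (F.card : ℝ) ≤ 1 := by exact_mod_cast hcard1
    linarith

/-- Blaschke selection. -/
theorem exists_hausdorff_limit [ProperSpace E] (K : ℕ → Set E) (hKc : ∀ k, IsCompact (K k))
    (hKb : ∀ k, K k ⊆ closedBall (0:E) 1) (hKne : ∀ k, (K k).Nonempty) :
    ∃ (φ : ℕ → ℕ) (L : Set E), StrictMono φ ∧ IsCompact L ∧ L.Nonempty ∧
      Tendsto (fun k => EMetric.hausdorffEdist (K (φ k)) L) atTop (𝓝 0) := by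
  have hcs : CompactSpace (closedBall (0:E) 1) :=
    isCompact_iff_compactSpace.1 (isCompact_closedBall 0 1)
  set X := ↥(closedBall (0:E) 1)
  have hApre : ∀ k, IsCompact ((Subtype.val : X → E) ⁻¹' K k) := by
    intro k
    have : IsClosed ((Subtype.val : X → E) ⁻¹' K k) :=
      (hKc k).isClosed.preimage continuous_subtype_val
    exact this.isCompact
  have hAne : ∀ k, ((Subtype.val : X → E) ⁻¹' K k).Nonempty := by
    intro k
    obtain ⟨x, hx⟩ := hKne k
    exact ⟨⟨x, hKb k hx⟩, hx⟩
  set A : ℕ → TopologicalSpace.NonemptyCompacts X := fun k =>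
    ⟨⟨(Subtype.val : X → E) ⁻¹' K k, hApre k⟩, hAne k⟩ with hA
  obtain ⟨L', -, φ, hφ, hconv⟩ :=
    (isCompact_univ (X := TopologicalSpace.NonemptyCompacts X)).tendsto_subseq
      (fun k => Set.mem_univ (A k))
  have hedist : Tendsto (fun k => edist (A (φ k)) L') atTop (𝓝 0) := by
    have := hconv.edist (tendsto_const_nhds (x := L') (f := atTop))
    simpa using this
  set L : Set E := Subtype.val '' (L' : Set X) with hL
  have hLc : IsCompact L := L'.isCompact.image continuous_subtype_val
  have hLne : L.Nonempty := L'.nonempty.image _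
  refine ⟨φ, L, hφ, hLc, hLne, ?_⟩
  have hrw : ∀ k, EMetric.hausdorffEdist (K (φ k)) L = edist (A (φ k)) L' := by
    intro k
    have h1 : Subtype.val '' ((A (φ k) : Set X)) = K (φ k) := by
      show Subtype.val '' ((Subtype.val : X → E) ⁻¹' K (φ k)) = K (φ k)
      rw [Subtype.image_preimage_coe]
      exact inter_eq_self_of_subset_right (hKb (φ k))
    have : EMetric.hausdorffEdist (K (φ k)) L
        = EMetric.hausdorffEdist (Subtype.val '' (A (φ k) : Set X))
            (Subtype.val '' (L' : Set X)) := by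
      rw [h1, hL]
    rw [this]; unfold EMetric.hausdorffEdist; rw [EMetric.hausdorffEdist_image isometry_subtype_coe]
    rfl
  simpa only [hrw] using hedist

section BallCover

variable {X : Type*} [MetricSpace X] [Nonempty X] [MeasurableSpace X] [BorelSpace X]

/-- From vanishing Hausdorff measure, extract a finite efficient cover by small open balls. -/
theorem exists_ball_cover {α : ℝ} (hα : 0 ≤ α) {L : Set X} (hL : IsCompact L)
    (hμ : μH[α] L = 0) {ε : ℝ} (hε : 0 < ε) :
    ∃ (F : Finset ℕ) (z : ℕ → X) (ρ : ℕ → ℝ),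
      (L ⊆ ⋃ n ∈ F, ball (z n) (ρ n)) ∧ (∀ n, 0 < ρ n ∧ ρ n ≤ 1/8) ∧
      (∑ n ∈ F, ρ n ^ α) < ε := by
  classical
  -- Step 1: extract an efficient countable cover from `μH[α] L = 0`.
  have happ := MeasureTheory.Measure.hausdorffMeasure_apply α L
  rw [hμ] at happ
  have hr₀ : (0:ℝ≥0∞) < ENNReal.ofReal (1/32) := by simp
  have hinf : (⨅ (S : ℕ → Set X) (_ : L ⊆ ⋃ n, S n)
      (_ : ∀ n, EMetric.diam (S n) ≤ ENNReal.ofReal (1/32)),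
      ∑' n, ⨆ _ : (S n).Nonempty, EMetric.diam (S n) ^ α) = 0 := by
    have h := (iSup_eq_bot.1 happ.symm) (ENNReal.ofReal (1/32))
    rwa [iSup_pos hr₀] at h
  have ext : ∀ εE : ℝ≥0∞, 0 < εE → ∃ S : ℕ → Set X, (L ⊆ ⋃ n, S n) ∧
      (∀ n, EMetric.diam (S n) ≤ ENNReal.ofReal (1/32)) ∧
      (∑' n, ⨆ _ : (S n).Nonempty, EMetric.diam (S n) ^ α) < εE := by
    intro εE hεE
    have h1 : (⨅ (S : ℕ → Set X) (_ : L ⊆ ⋃ n, S n)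
        (_ : ∀ n, EMetric.diam (S n) ≤ ENNReal.ofReal (1/32)),
        ∑' n, ⨆ _ : (S n).Nonempty, EMetric.diam (S n) ^ α) < εE := by
      rw [hinf]; exact hεE
    obtain ⟨S, h2⟩ := iInf_lt_iff.mp h1
    obtain ⟨hcov, h3⟩ := iInf_lt_iff.mp h2
    obtain ⟨hdiam, hsum⟩ := iInf_lt_iff.mp h3
    exact ⟨S, hcov, hdiam, hsum⟩
  rcases hα.eq_or_lt with h0 | hpos
  · -- α = 0 : the set L must be empty
    obtain ⟨S, hcov, hdiam, hsum⟩ := ext (ENNReal.ofReal (1/2)) (by simp)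
    have hSe : ∀ n, S n = ∅ := by
      intro n
      by_contra hne
      rw [← Set.not_nonempty_iff_eq_empty, not_not] at hne
      have hterm : (1:ℝ≥0∞) ≤ ∑' n, ⨆ _ : (S n).Nonempty, EMetric.diam (S n) ^ α := by
        refine le_trans ?_ (ENNReal.le_tsum n)
        rw [iSup_pos hne, ← h0, ENNReal.rpow_zero]
      have h12 : (ENNReal.ofReal (1/2)) < 1 := by
        rw [show (1:ℝ≥0∞) = ENNReal.ofReal 1 by simp]
        exact (ENNReal.ofReal_lt_ofReal_iff_of_nonneg (by norm_num)).2 (by norm_num)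
      exact absurd (lt_of_le_of_lt hterm hsum) (not_lt.2 h12.le)
    have hLe : L ⊆ ∅ := by
      refine hcov.trans ?_
      simp [hSe]
    refine ⟨∅, fun _ => Classical.arbitrary X, fun _ => 1/16, ?_, ?_, ?_⟩
    · intro x hx; exact absurd (hLe hx) (Set.notMem_empty x)
    · intro n; norm_num
    · simpa using hε
  · -- α > 0
    set q : ℝ := (1/2 : ℝ) ^ α with hqdef
    have hq0 : 0 ≤ q := Real.rpow_nonneg (by norm_num) α
    have hq1 : q < 1 := Real.rpow_lt_one (by norm_num) (by norm_num) hpos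
    set Sgeo : ℝ := (1 - q)⁻¹ with hSgeo
    have hSgeo0 : 0 < Sgeo := by rw [hSgeo]; exact inv_pos.2 (by linarith)
    have h2α : (0:ℝ) < (2:ℝ)^α := Real.rpow_pos_of_pos (by norm_num) α
    have h4α : (0:ℝ) < (4:ℝ)^α := Real.rpow_pos_of_pos (by norm_num) α
    set c : ℝ := ε / (4 * (2:ℝ)^α * Sgeo) with hc
    have hc0 : 0 < c := by rw [hc]; positivity
    set θ : ℝ := min (1/16) (c ^ α⁻¹) with hθ
    have hθ0 : 0 < θ := lt_min (by norm_num) (Real.rpow_pos_of_pos hc0 α⁻¹)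
    have hθ16 : θ ≤ 1/16 := min_le_left _ _
    have hθα : θ ^ α ≤ c := by
      calc θ ^ α ≤ (c ^ α⁻¹) ^ α :=
            Real.rpow_le_rpow hθ0.le (min_le_right _ _) hα
        _ = c := Real.rpow_inv_rpow hc0.le hpos.ne'
    set ε₃ : ℝ := ε / (4 * (4:ℝ)^α) with hε₃
    have hε₃0 : 0 < ε₃ := by rw [hε₃]; positivity
    obtain ⟨S, hcov, hdiam, hsum⟩ := ext (ENNReal.ofReal ε₃) (ENNReal.ofReal_pos.2 hε₃0)
    set D : ℕ → ℝ := fun n => (EMetric.diam (S n)).toReal with hD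
    have hDne : ∀ n, EMetric.diam (S n) ≠ ⊤ :=
      fun n => (lt_of_le_of_lt (hdiam n) ENNReal.ofReal_lt_top).ne
    have hD0 : ∀ n, 0 ≤ D n := fun n => ENNReal.toReal_nonneg
    have hD32 : ∀ n, D n ≤ 1/32 :=
      fun n => ENNReal.toReal_le_of_le_ofReal (by norm_num) (hdiam n)
    set z : ℕ → X := fun n => if h : (S n).Nonempty then h.choose else Classical.arbitrary X
      with hz
    set ρ : ℕ → ℝ := fun n => 2 * D n + θ * (1/2)^n with hρ
    have hρ0 : ∀ n, 0 < ρ n := by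
      intro n
      have hpos' : (0:ℝ) < θ * (1/2)^n := mul_pos hθ0 (by positivity)
      rw [hρ]; simp only
      linarith [hD0 n]
    have hρ18 : ∀ n, ρ n ≤ 1/8 := by
      intro n
      have h1 : θ * (1/2)^n ≤ 1/16 := by
        calc θ * (1/2)^n ≤ θ * 1 := by
              apply mul_le_mul_of_nonneg_left _ hθ0.le
              exact pow_le_one₀ (by norm_num) (by norm_num)
          _ ≤ 1/16 := by rw [mul_one]; exact hθ16
      have h2 := hD32 n
      rw [hρ]; simp only
      linarith
    have hSball : ∀ n, S n ⊆ ball (z n) (ρ n) := by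
      intro n x hx
      have hne : (S n).Nonempty := ⟨x, hx⟩
      have hzn : z n ∈ S n := by
        rw [hz]; simp only [dif_pos hne]; exact hne.choose_spec
      have hd : dist x (z n) ≤ D n :=
        Metric.dist_le_diam_of_mem' (hDne n) hx hzn
      rw [mem_ball]
      have hpos' : (0:ℝ) < θ * (1/2)^n := mul_pos hθ0 (by positivity)
      rw [hρ]; simp only
      linarith [hD0 n, hd]
    have hcov2 : L ⊆ ⋃ n, ball (z n) (ρ n) := by
      intro x hx
      obtain ⟨n, hn⟩ := Set.mem_iUnion.1 (hcov hx)
      exact Set.mem_iUnion.2 ⟨n, hSball n hn⟩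
    obtain ⟨F, hF⟩ := hL.elim_finite_subcover (fun n => ball (z n) (ρ n))
      (fun n => isOpen_ball) hcov2
    refine ⟨F, z, ρ, hF, fun n => ⟨hρ0 n, hρ18 n⟩, ?_⟩
    -- sum estimate
    have hterm : ∀ n, ρ n ^ α ≤ (4:ℝ)^α * (D n)^α + (2:ℝ)^α * θ^α * q^n := by
      intro n
      have e1 : ρ n ^ α ≤ (2:ℝ)^α * ((2 * D n)^α + (θ * (1/2)^n)^α) := by
        rw [hρ]; simp only
        exact add_rpow_le (by linarith [hD0 n]) (by positivity) hα
      have e2 : ((2:ℝ) * D n)^α = (2:ℝ)^α * (D n)^α :=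
        Real.mul_rpow (by norm_num) (hD0 n)
      have e3 : (θ * (1/2:ℝ)^n)^α = θ^α * q^n := by
        rw [Real.mul_rpow hθ0.le (by positivity), pow_rpow_comm (by norm_num : (0:ℝ) ≤ 1/2)]
      have e4 : (2:ℝ)^α * ((2:ℝ)^α * (D n)^α) = (4:ℝ)^α * (D n)^α := by
        rw [← mul_assoc, ← Real.mul_rpow (by norm_num) (by norm_num)]
        norm_num
      calc ρ n ^ α ≤ (2:ℝ)^α * ((2 * D n)^α + (θ * (1/2)^n)^α) := e1
        _ = (2:ℝ)^α * ((2 * D n)^α) + (2:ℝ)^α * ((θ * (1/2)^n)^α) := by ring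
        _ = (4:ℝ)^α * (D n)^α + (2:ℝ)^α * θ^α * q^n := by
            rw [e2, e3, e4]; ring
    have hsum1 : ∑ n ∈ F, (D n)^α ≤ ε₃ := by
      have hkey : ∀ n, (D n)^α
          = (⨆ _ : (S n).Nonempty, EMetric.diam (S n) ^ α).toReal := by
        intro n
        by_cases hne : (S n).Nonempty
        · rw [iSup_pos hne, hD]; simp only
          exact ENNReal.toReal_rpow _ _
        · rw [iSup_neg hne]
          have hSn : S n = ∅ := Set.not_nonempty_iff_eq_empty.1 hne
          simp [hD, hSn, EMetric.diam, Real.zero_rpow hpos.ne']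
      have hfin : ∀ n ∈ F, (⨆ _ : (S n).Nonempty, EMetric.diam (S n) ^ α) ≠ ⊤ := by
        intro n _
        refine ne_of_lt (lt_of_le_of_lt (iSup_le fun _ => le_refl _) ?_)
        exact ENNReal.rpow_lt_top_of_nonneg hα (hDne n)
      calc ∑ n ∈ F, (D n)^α
          = ∑ n ∈ F, (⨆ _ : (S n).Nonempty, EMetric.diam (S n) ^ α).toReal := by
            exact Finset.sum_congr rfl (fun n _ => hkey n)
        _ = (∑ n ∈ F, ⨆ _ : (S n).Nonempty, EMetric.diam (S n) ^ α).toReal :=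
            (ENNReal.toReal_sum hfin).symm
        _ ≤ ε₃ := by
            apply ENNReal.toReal_le_of_le_ofReal hε₃0.le
            exact le_trans (ENNReal.sum_le_tsum F) hsum.le
    have hsum2 : ∑ n ∈ F, q^n ≤ Sgeo := by
      rw [hSgeo, ← tsum_geometric_of_lt_one hq0 hq1]
      exact Summable.sum_le_tsum F (fun n _ => pow_nonneg hq0 n)
        (summable_geometric_of_lt_one hq0 hq1)
    calc ∑ n ∈ F, ρ n ^ α
        ≤ ∑ n ∈ F, ((4:ℝ)^α * (D n)^α + (2:ℝ)^α * θ^α * q^n) :=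
          Finset.sum_le_sum (fun n _ => hterm n)
      _ = (4:ℝ)^α * (∑ n ∈ F, (D n)^α) + (2:ℝ)^α * θ^α * (∑ n ∈ F, q^n) := by
          rw [Finset.sum_add_distrib, ← Finset.mul_sum, ← Finset.mul_sum]
      _ ≤ (4:ℝ)^α * ε₃ + (2:ℝ)^α * θ^α * Sgeo := by
          have hθαnn : 0 ≤ θ^α := Real.rpow_nonneg hθ0.le α
          apply add_le_add
          · exact mul_le_mul_of_nonneg_left hsum1 h4α.le
          · apply mul_le_mul_of_nonneg_left hsum2 (by positivity)
      _ ≤ ε/4 + ε/4 := by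
          apply add_le_add
          · rw [hε₃]; rw [mul_div_assoc']; rw [div_le_div_iff₀ (by positivity) (by norm_num)]
            ring_nf; nlinarith [h4α]
          · have h1 : (2:ℝ)^α * θ^α * Sgeo ≤ (2:ℝ)^α * c * Sgeo := by
              apply mul_le_mul_of_nonneg_right _ hSgeo0.le
              exact mul_le_mul_of_nonneg_left hθα h2α.le
            have h2 : (2:ℝ)^α * c * Sgeo = ε/4 := by
              rw [hc]; field_simp
            linarith
      _ < ε := by linarith

end BallCover

end WorkRaccoonAux

open WorkRaccoonAux in
set_option maxHeartbeats 1000000 in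
/-- **Work Raccoon Lemma, second part.** For `𝒞` a nonempty collection of compact subsets of
the closed unit ball of `ℝ^d`, closed under rescalings and Hausdorff convergence, and any
exponent `α ∈ 𝒜(𝒞)` (i.e. `α ≥ 0` with `H^α(K) = 0` for every `K ∈ 𝒞`), there is a constant
`C(α)` such that `N(K, r) · r^α ≤ C(α)` for every `K ∈ 𝒞` and every `0 < r ≤ 1`. -/
theorem work_raccoon_minkowski_bound (d : ℕ)
    (𝒞 : Set (Set (EuclideanSpace ℝ (Fin d))))
    (hne : 𝒞.Nonempty)
    (hcpt : ∀ K ∈ 𝒞, IsCompact K ∧ K ⊆ closedBall (0 : EuclideanSpace ℝ (Fin d)) 1)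
    (hres : ∀ K ∈ 𝒞, ∀ x ∈ closedBall (0 : EuclideanSpace ℝ (Fin d)) 1,
      ∀ r : ℝ, 0 < r → r ≤ 1 →
        (((fun w => r⁻¹ • (w - x)) '' K) ∩ closedBall 0 1) ∈ 𝒞)
    (hhaus : ∀ (K : ℕ → Set (EuclideanSpace ℝ (Fin d)))
      (L : Set (EuclideanSpace ℝ (Fin d))),
      (∀ k, K k ∈ 𝒞) → IsCompact L →
      Tendsto (fun k => EMetric.hausdorffEdist (K k) L) atTop (𝓝 0) → L ∈ 𝒞)
    (α : ℝ) (hα : 0 ≤ α) (hαA : ∀ K ∈ 𝒞, μH[α] K = 0) :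
    ∃ C : ℝ, ∀ K ∈ 𝒞, ∀ r : ℝ, 0 < r → r ≤ 1 →
      (coverNum K r : ℝ) * r ^ α ≤ C := by
  classical
  set t : ℝ := (2:ℝ) ^ α with ht
  have ht1 : (1:ℝ) ≤ t := by
    rw [ht]
    calc (1:ℝ) = (2:ℝ) ^ (0:ℝ) := (Real.rpow_zero 2).symm
    _ ≤ (2:ℝ) ^ α := Real.rpow_le_rpow_of_exponent_le (by norm_num) hα
  have ht0 : (0:ℝ) < t := lt_of_lt_of_le one_pos ht1
  -- Main claim: the packing numbers grow at most like `t^n = 2^(α n)`.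
  have hclaim : ∃ C₀ : ℝ, ∀ n, (packMax 𝒞 n : ℝ) ≤ C₀ * t^n := by
    by_contra hcon
    push_neg at hcon
    -- choose good scales with large packing numbers
    have hgs := good_select ht1 hcon
    choose nn hnn1 hnn2 using fun k : ℕ => hgs (k : ℝ)
    have hmem := fun k : ℕ => packMax_mem hne hcpt (nn k)
    choose KK hKK ss hssK hsssep hsscard using hmem
    have hKc : ∀ k, IsCompact (KK k) := fun k => (hcpt _ (hKK k)).1
    have hKb : ∀ k, KK k ⊆ closedBall (0 : EuclideanSpace ℝ (Fin d)) 1 := fun k => (hcpt _ (hKK k)).2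
    have hKne : ∀ k, (KK k).Nonempty := by
      intro k
      have h1 : (0:ℝ) ≤ (k:ℝ) := Nat.cast_nonneg k
      have h2 : (0:ℝ) < (packMax 𝒞 (nn k) : ℝ) := lt_of_le_of_lt h1 (hnn2 k)
      have h3 : 0 < (ss k).card := by
        rw [hsscard k]
        exact_mod_cast h2
      obtain ⟨p, hp⟩ := Finset.card_pos.1 h3
      exact ⟨p, hssK k hp⟩
    obtain ⟨φ, L, hφ, hLc, hLne, hconv⟩ := exists_hausdorff_limit KK hKc hKb hKne
    have hL𝒞 : L ∈ 𝒞 := hhaus (fun k => KK (φ k)) L (fun k => hKK (φ k)) hLc hconv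
    have hμL : μH[α] L = 0 := hαA L hL𝒞
    have ht3 : (0:ℝ) < t^3 := by positivity
    obtain ⟨F, z, ρ, hFcov, hρc, hFsum⟩ :=
      exists_ball_cover hα hLc hμL (ε := 1/(2*t^3)) (by positivity)
    set U : Set (EuclideanSpace ℝ (Fin d)) := ⋃ i ∈ F, ball (z i) (ρ i) with hU
    have hUopen : IsOpen U := isOpen_biUnion (fun i _ => isOpen_ball)
    obtain ⟨δ₀, hδ₀, hthick⟩ := hLc.exists_thickening_subset_open hUopen hFcov
    have hev : ∀ᶠ k in atTop,
        EMetric.hausdorffEdist (KK (φ k)) L ≤ ENNReal.ofReal (δ₀/2) := by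
      refine (ENNReal.tendsto_nhds_zero.1 hconv) _ ?_
      exact ENNReal.ofReal_pos.2 (by linarith)
    obtain ⟨N, hN⟩ := Filter.eventually_atTop.1 hev
    set k : ℕ := max N (2 * F.card + 1) with hk
    have hKU : KK (φ k) ⊆ U := by
      intro x hx
      have h1 : EMetric.infEdist x L ≤ EMetric.hausdorffEdist (KK (φ k)) L :=
        EMetric.infEdist_le_hausdorffEdist_of_mem hx
      have h2 : EMetric.infEdist x L < ENNReal.ofReal δ₀ := by
        refine lt_of_le_of_lt (h1.trans (hN k (le_max_left _ _))) ?_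
        exact (ENNReal.ofReal_lt_ofReal_iff hδ₀).2 (by linarith)
      exact hthick (mem_thickening_iff_infEdist_lt.2 h2)
    -- counting
    set n := nn (φ k)
    set s := ss (φ k)
    have hcover : s ⊆ F.biUnion (fun i => s.filter (fun p => dist p (z i) < ρ i)) := by
      intro p hp
      have hpU : p ∈ U := hKU (hssK (φ k) hp)
      obtain ⟨i, hi, hpi⟩ := Set.mem_iUnion₂.1 hpU
      exact Finset.mem_biUnion.2 ⟨i, hi, Finset.mem_filter.2 ⟨hp, mem_ball.1 hpi⟩⟩
    have hcard1 : s.card ≤ ∑ i ∈ F, (s.filter (fun p => dist p (z i) < ρ i)).card :=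
      le_trans (Finset.card_le_card hcover) Finset.card_biUnion_le
    have hcard2 : (s.card : ℝ) ≤ ∑ i ∈ F, ((s.filter (fun p => dist p (z i) < ρ i)).card : ℝ) := by
      exact_mod_cast hcard1
    have hcard3 : (s.card : ℝ) ≤ ∑ i ∈ F, (1 + (packMax 𝒞 n : ℝ) * t^3 * ρ i ^ α) := by
      refine hcard2.trans (Finset.sum_le_sum (fun i _ => ?_))
      exact filter_ball_card hcpt hres hα ht (hnn1 (φ k)) (hKK (φ k)) (hssK (φ k))
        (hsssep (φ k)) (z i) (hρc i).1 (hρc i).2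
    have hMR0 : (0:ℝ) ≤ (packMax 𝒞 n : ℝ) := Nat.cast_nonneg _
    have hcard4 : (s.card : ℝ) ≤ F.card + (packMax 𝒞 n : ℝ) * t^3 * (∑ i ∈ F, ρ i ^ α) := by
      calc (s.card : ℝ) ≤ ∑ i ∈ F, (1 + (packMax 𝒞 n : ℝ) * t^3 * ρ i ^ α) := hcard3
        _ = F.card + (packMax 𝒞 n : ℝ) * t^3 * (∑ i ∈ F, ρ i ^ α) := by
            rw [Finset.sum_add_distrib, Finset.sum_const, ← Finset.mul_sum]
            simp [mul_comm]
    have hhalf : (packMax 𝒞 n : ℝ) * t^3 * (∑ i ∈ F, ρ i ^ α)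
        ≤ (packMax 𝒞 n : ℝ) / 2 := by
      have h1 : (∑ i ∈ F, ρ i ^ α) ≤ 1/(2*t^3) := hFsum.le
      calc (packMax 𝒞 n : ℝ) * t^3 * (∑ i ∈ F, ρ i ^ α)
          ≤ (packMax 𝒞 n : ℝ) * t^3 * (1/(2*t^3)) := by
            apply mul_le_mul_of_nonneg_left h1 (by positivity)
        _ = (packMax 𝒞 n : ℝ) / 2 := by field_simp
    have hfin1 : (packMax 𝒞 n : ℝ) ≤ 2 * F.card := by
      have := hsscard (φ k)
      have hseq : (s.card : ℝ) = (packMax 𝒞 n : ℝ) := by exact_mod_cast this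
      rw [hseq] at hcard4
      linarith
    have hbig : (2 * F.card + 1 : ℝ) ≤ (packMax 𝒞 n : ℝ) := by
      have h1 : (k:ℝ) < packMax 𝒞 (nn k) := hnn2 k
      have h2 : ((φ k : ℕ):ℝ) < packMax 𝒞 n := by
        exact_mod_cast hnn2 (φ k)
      have h3 : (k:ℕ) ≤ φ k := hφ.le_apply
      have h4 : (2 * F.card + 1 : ℕ) ≤ k := le_max_right _ _
      have h5 : (2 * F.card + 1 : ℝ) ≤ ((φ k : ℕ) : ℝ) := by
        exact_mod_cast le_trans h4 h3
      linarith
    linarith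
  -- Conclusion from the claim
  obtain ⟨C₀, hC₀⟩ := hclaim
  have hC₀0 : 0 ≤ C₀ := by
    have := hC₀ 0
    simp at this
    exact le_trans (Nat.cast_nonneg _) this
  refine ⟨C₀ * t, ?_⟩
  intro K hK r hr0 hr1
  obtain ⟨m, hm1, hm2⟩ := exists_dyadic hr0 hr1
  obtain ⟨Q, hQK, hQsep, hQmax⟩ := exists_maximal_sep (hcpt K hK).2
    (ρ := (1/2:ℝ)^m) (by positivity)
  have hcov : coverNum K r ≤ Q.card := by
    apply Nat.sInf_le
    refine ⟨Q, rfl, ?_⟩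
    intro y hy
    obtain ⟨p, hp, hd⟩ := hQmax y hy
    refine Set.mem_biUnion hp ?_
    rw [mem_ball]
    exact lt_of_lt_of_le hd (le_trans hm1 (le_refl r))
  have hQle : Q.card ≤ packMax 𝒞 m := card_le_packMax hcpt hK hQK hQsep
  have h1 : (coverNum K r : ℝ) ≤ C₀ * t^m := by
    refine le_trans ?_ (hC₀ m)
    exact_mod_cast le_trans hcov hQle
  have h2 : r ^ α ≤ t * ((1/2:ℝ)^m) ^ α := by
    calc r ^ α ≤ (2 * (1/2:ℝ)^m) ^ α := Real.rpow_le_rpow hr0.le hm2.le hα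
      _ = (2:ℝ)^α * ((1/2:ℝ)^m) ^ α := Real.mul_rpow (by norm_num) (by positivity)
      _ = t * ((1/2:ℝ)^m) ^ α := by rw [ht]
  have h3 : (0:ℝ) ≤ r ^ α := Real.rpow_nonneg hr0.le α
  have h4 : (0:ℝ) ≤ C₀ * t^m := by positivity
  calc (coverNum K r : ℝ) * r ^ α ≤ (C₀ * t^m) * (t * ((1/2:ℝ)^m) ^ α) :=
        mul_le_mul h1 h2 h3 h4
    _ = C₀ * t * (t^m * ((1/2:ℝ)^m) ^ α) := by ring
    _ = C₀ * t := by
        rw [ht, tpow_halfpow m]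
        rw [mul_one]
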